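/- (Theorem 1, invariance part.) Let d ≥ 3 and let u : ℝ × ℝ^d → ℝ^d be a smooth real Schur flow satisfying the barotropic Euler equation with smooth potential Π. Set M = ⌊(d+1)/2⌋. For each i with 1 ≤ i ≤ M, define the 1-form field U_i by (U_i)_k = u_k if k ∈ {2i−1, 2i} and k ≤ d, and (U_i)_k = 0 otherwise, and define the antisymmetric 2-form field Ω_i by (Ω_i)_{jk} = ∂_j (U_i)_k − ∂_k (U_i)_j. Then each Ω_i is Lie-transported by u: for all j, k, ∂_t (Ω_i)_{jk} + Σ_{m=1}^{d} ( u_m ∂_m (Ω_i)_{jk} + (Ω_i)_{mk} ∂_j u_m + (Ω_i)_{jm} ∂_k u_m ) = 0. -/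

import Mathlib

/-- Partial derivative in time of a function on `ℝ × ℝ^d`. -/
noncomputable def pdt {d : ℕ} (f : ℝ × (Fin d → ℝ) → ℝ) (p : ℝ × (Fin d → ℝ)) : ℝ :=
  fderiv ℝ f p (1, 0)

/-- Partial derivative in the `j`-th spatial coordinate of a function on `ℝ × ℝ^d`. -/
noncomputable def pdx {d : ℕ} (j : Fin d) (f : ℝ × (Fin d → ℝ) → ℝ) (p : ℝ × (Fin d → ℝ)) : ℝ :=
  fderiv ℝ f p (0, Pi.single j 1)

/-- Real Schur flow: with 1-based indices `J = j+1`, `K = k+1`, we have `∂_J u_K = 0`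
whenever `J > 2⌈K/2⌉`; here `⌈K/2⌉ = (K+1)/2` in natural-number division. -/
def IsRSF {d : ℕ} (u : Fin d → ℝ × (Fin d → ℝ) → ℝ) : Prop :=
  ∀ j k : Fin d, 2 * (((k : ℕ) + 1 + 1) / 2) < (j : ℕ) + 1 → ∀ p, pdx j (u k) p = 0

/-! ### Auxiliary toolkit: directional partial derivatives -/

noncomputable def pd {d : ℕ} (v : ℝ × (Fin d → ℝ)) (f : ℝ × (Fin d → ℝ) → ℝ)
    (p : ℝ × (Fin d → ℝ)) : ℝ := fderiv ℝ f p v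

section pdtool

variable {d : ℕ} {v w : ℝ × (Fin d → ℝ)} {f g : ℝ × (Fin d → ℝ) → ℝ}
  {p : ℝ × (Fin d → ℝ)} {c : ℝ}

lemma pdt_eq (f : ℝ × (Fin d → ℝ) → ℝ) : pdt f = pd (1, 0) f := rfl

lemma pdx_eq (j : Fin d) (f : ℝ × (Fin d → ℝ) → ℝ) : pdx j f = pd (0, Pi.single j 1) f := rfl

lemma pd_congr (h : ∀ q, f q = g q) : pd v f p = pd v g p := by
  rw [show f = g from funext h]

lemma pd_const : pd v (fun _ => c) p = 0 := by simp [pd]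

lemma pd_zero_fun (h : ∀ q, f q = 0) : pd v f p = 0 := by
  rw [pd_congr (g := fun _ => (0:ℝ)) h]; exact pd_const

lemma pd_add (hf : DifferentiableAt ℝ f p) (hg : DifferentiableAt ℝ g p) :
    pd v (fun q => f q + g q) p = pd v f p + pd v g p := by
  simp [pd, fderiv_fun_add hf hg]

lemma pd_neg : pd v (fun q => -f q) p = -pd v f p := by
  simp [pd, fderiv_neg]

lemma pd_sub (hf : DifferentiableAt ℝ f p) (hg : DifferentiableAt ℝ g p) :
    pd v (fun q => f q - g q) p = pd v f p - pd v g p := by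
  simp [pd, fderiv_fun_sub hf hg]

lemma pd_const_mul (hf : DifferentiableAt ℝ f p) :
    pd v (fun q => c * f q) p = c * pd v f p := by
  simp [pd, fderiv_const_mul hf]

lemma pd_mul (hf : DifferentiableAt ℝ f p) (hg : DifferentiableAt ℝ g p) :
    pd v (fun q => f q * g q) p = f p * pd v g p + pd v f p * g p := by
  rw [pd, fderiv_fun_mul hf hg]; simp [pd]; ring

lemma pd_sum {ι : Type*} (s : Finset ι) (F : ι → ℝ × (Fin d → ℝ) → ℝ)
    (h : ∀ m ∈ s, DifferentiableAt ℝ (F m) p) :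
    pd v (fun q => ∑ m ∈ s, F m q) p = ∑ m ∈ s, pd v (F m) p := by
  rw [pd, fderiv_fun_sum h]; simp [pd]

lemma pd_contDiff (hf : ContDiff ℝ (⊤ : ℕ∞) f) :
    ContDiff ℝ (⊤ : ℕ∞) (fun q => pd v f q) := by
  have h1 : ContDiff ℝ (⊤ : ℕ∞) (fun q => fderiv ℝ f q) :=
    hf.fderiv_right (by exact_mod_cast le_rfl)
  exact (ContinuousLinearMap.apply ℝ ℝ v).contDiff.comp h1

lemma pd_comm (hf : ContDiff ℝ (⊤ : ℕ∞) f) :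
    pd v (fun q => pd w f q) p = pd w (fun q => pd v f q) p := by
  have hsymm : IsSymmSndFDerivAt ℝ f p :=
    hf.contDiffAt.isSymmSndFDerivAt (by
      rw [minSmoothness_of_isRCLikeNormedField, show ((2:WithTop ℕ∞)) = ((2:ℕ∞):WithTop ℕ∞) by rfl]
      exact WithTop.coe_le_coe.mpr le_top)
  have hd : DifferentiableAt ℝ (fderiv ℝ f) p :=
    ((hf.fderiv_right (m := (⊤:ℕ∞)) (by exact_mod_cast le_rfl)).differentiable
      (by simp)).differentiableAt
  have key : ∀ a b : ℝ × (Fin d → ℝ),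
      pd a (fun q => pd b f q) p = fderiv ℝ (fderiv ℝ f) p a b := by
    intro a b
    have heq : (fun q => pd b f q) = fun q => (fderiv ℝ f q) ((fun _ => b) q) := rfl
    rw [pd, heq, fderiv_clm_apply hd (differentiableAt_const b)]
    simp
  rw [key, key, hsymm.eq]

/-! Bridged versions for `pdt` / `pdx`. -/

lemma hdiff (hf : ContDiff ℝ (⊤ : ℕ∞) f) (q : ℝ × (Fin d → ℝ)) : DifferentiableAt ℝ f q :=
  hf.differentiable (by simp) q

lemma pdx_zero_fun {a : Fin d} (h : ∀ q, f q = 0) : pdx a f p = 0 := by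
  rw [pdx_eq]; exact pd_zero_fun h

lemma pdt_zero_fun (h : ∀ q, f q = 0) : pdt f p = 0 := by
  rw [pdt_eq]; exact pd_zero_fun h

lemma pdx_add {a : Fin d} (hf : DifferentiableAt ℝ f p) (hg : DifferentiableAt ℝ g p) :
    pdx a (fun q => f q + g q) p = pdx a f p + pdx a g p := by
  simp only [pdx_eq]; exact pd_add hf hg

lemma pdx_neg {a : Fin d} : pdx a (fun q => -f q) p = -pdx a f p := by
  simp only [pdx_eq]; exact pd_neg

lemma pdx_sub {a : Fin d} (hf : DifferentiableAt ℝ f p) (hg : DifferentiableAt ℝ g p) :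
    pdx a (fun q => f q - g q) p = pdx a f p - pdx a g p := by
  simp only [pdx_eq]; exact pd_sub hf hg

lemma pdt_sub (hf : DifferentiableAt ℝ f p) (hg : DifferentiableAt ℝ g p) :
    pdt (fun q => f q - g q) p = pdt f p - pdt g p := by
  simp only [pdt_eq]; exact pd_sub hf hg

lemma pdx_const_mul {a : Fin d} (hf : DifferentiableAt ℝ f p) :
    pdx a (fun q => c * f q) p = c * pdx a f p := by
  simp only [pdx_eq]; exact pd_const_mul hf

lemma pdt_const_mul (hf : DifferentiableAt ℝ f p) :
    pdt (fun q => c * f q) p = c * pdt f p := by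
  simp only [pdt_eq]; exact pd_const_mul hf

lemma pdx_mul {a : Fin d} (hf : DifferentiableAt ℝ f p) (hg : DifferentiableAt ℝ g p) :
    pdx a (fun q => f q * g q) p = f p * pdx a g p + pdx a f p * g p := by
  simp only [pdx_eq]; exact pd_mul hf hg

lemma pdx_sum {ι : Type*} {a : Fin d} (s : Finset ι) (F : ι → ℝ × (Fin d → ℝ) → ℝ)
    (h : ∀ m ∈ s, DifferentiableAt ℝ (F m) p) :
    pdx a (fun q => ∑ m ∈ s, F m q) p = ∑ m ∈ s, pdx a (F m) p := by
  simp only [pdx_eq]; exact pd_sum s F h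

lemma pdx_contDiff {a : Fin d} (hf : ContDiff ℝ (⊤ : ℕ∞) f) :
    ContDiff ℝ (⊤ : ℕ∞) (fun q => pdx a f q) := by
  simp only [pdx_eq]; exact pd_contDiff hf

lemma pdt_contDiff (hf : ContDiff ℝ (⊤ : ℕ∞) f) :
    ContDiff ℝ (⊤ : ℕ∞) (fun q => pdt f q) := by
  simp only [pdt_eq]; exact pd_contDiff hf

lemma pdx_pdx_comm {a b : Fin d} (hf : ContDiff ℝ (⊤ : ℕ∞) f) :
    pdx a (fun q => pdx b f q) p = pdx b (fun q => pdx a f q) p := by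
  simp only [pdx_eq]; exact pd_comm hf

lemma pdx_pdt_comm {a : Fin d} (hf : ContDiff ℝ (⊤ : ℕ∞) f) :
    pdx a (fun q => pdt f q) p = pdt (fun q => pdx a f q) p := by
  simp only [pdx_eq, pdt_eq]; exact pd_comm hf

end pdtool

/-- Differentiating the Euler equation in the spatial direction `a`. -/
lemma euler_deriv {d : ℕ} (u : Fin d → ℝ × (Fin d → ℝ) → ℝ) (P : ℝ × (Fin d → ℝ) → ℝ)
    (hu : ∀ k, ContDiff ℝ (⊤ : ℕ∞) (u k))
    (heuler : ∀ k p, pdt (u k) p + ∑ j, u j p * pdx j (u k) p = -(pdx k P p))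
    (a b : Fin d) (p : ℝ × (Fin d → ℝ)) :
    pdx a (fun q => pdt (u b) q) p
      + ∑ m, (pdx a (u m) p * pdx m (u b) p + u m p * pdx a (fun q => pdx m (u b) q) p)
      = -(pdx a (fun q => pdx b P q) p) := by
  have hPfun : (fun q => pdx b P q)
      = (fun q => -(pdt (u b) q + ∑ m, u m q * pdx m (u b) q)) :=
    funext fun q => by have := heuler b q; linarith
  have hA : DifferentiableAt ℝ (fun q => pdt (u b) q) p := hdiff (pdt_contDiff (hu b)) p
  have hBm : ∀ m : Fin d, DifferentiableAt ℝ (fun q => u m q * pdx m (u b) q) p :=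
    fun m => (hdiff (hu m) p).mul (hdiff (pdx_contDiff (hu b)) p)
  have hB : DifferentiableAt ℝ (fun q => ∑ m, u m q * pdx m (u b) q) p :=
    DifferentiableAt.fun_sum fun m _ => hBm m
  have hS : pdx a (fun q => ∑ m, u m q * pdx m (u b) q) p
      = ∑ m, pdx a (fun q => u m q * pdx m (u b) q) p :=
    pdx_sum _ _ fun m _ => hBm m
  have hterm : ∀ m : Fin d, pdx a (fun q => u m q * pdx m (u b) q) p
      = pdx a (u m) p * pdx m (u b) p + u m p * pdx a (fun q => pdx m (u b) q) p := by
    intro m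
    rw [pdx_mul (hdiff (hu m) p) (hdiff (pdx_contDiff (hu b)) p)]
    ring
  rw [hPfun, pdx_neg, neg_neg, pdx_add hA hB, hS,
    Finset.sum_congr rfl fun m _ => hterm m]

/-- Key vanishing of mixed second derivatives of the pressure. -/
lemma keyP {d : ℕ} (u : Fin d → ℝ × (Fin d → ℝ) → ℝ) (P : ℝ × (Fin d → ℝ) → ℝ)
    (hu : ∀ k, ContDiff ℝ (⊤ : ℕ∞) (u k)) (hRSF : IsRSF u)
    (heuler : ∀ k p, pdt (u k) p + ∑ j, u j p * pdx j (u k) p = -(pdx k P p))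
    (r s : Fin d) (h : 2 * (((r : ℕ) + 1 + 1) / 2) < (s : ℕ) + 1)
    (p : ℝ × (Fin d → ℝ)) : pdx s (fun q => pdx r P q) p = 0 := by
  have hzero : ∀ q, pdx s (u r) q = 0 := hRSF s r h
  have hE := euler_deriv u P hu heuler s r p
  have h1 : pdx s (fun q => pdt (u r) q) p = 0 := by
    rw [pdx_pdt_comm (hu r)]; exact pdt_zero_fun hzero
  have h2 : ∀ m : Fin d,
      pdx s (u m) p * pdx m (u r) p + u m p * pdx s (fun q => pdx m (u r) q) p = 0 := by
    intro m
    have hx : pdx s (fun q => pdx m (u r) q) p = 0 := by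
      rw [pdx_pdx_comm (hu r)]; exact pdx_zero_fun hzero
    by_cases hm : 2 * (((r : ℕ) + 1 + 1) / 2) < (m : ℕ) + 1
    · rw [hRSF m r hm p, hx]; ring
    · rw [hRSF s m (by omega) p, hx]; ring
  rw [h1, Finset.sum_eq_zero fun m _ => h2 m] at hE
  linarith

/-! ### Main theorem -/

theorem rsf_component_vorticity_lie_transport
    {d : ℕ} (hd : 3 ≤ d)
    (u : Fin d → ℝ × (Fin d → ℝ) → ℝ) (P : ℝ × (Fin d → ℝ) → ℝ)
    (hu : ∀ k, ContDiff ℝ (⊤ : ℕ∞) (u k)) (hP : ContDiff ℝ (⊤ : ℕ∞) P)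
    (hRSF : IsRSF u)
    (heuler : ∀ k p, pdt (u k) p + ∑ j, u j p * pdx j (u k) p = -(pdx k P p))
    (i : ℕ) (hi : 1 ≤ i) (hiM : i ≤ (d + 1) / 2)
    (U : Fin d → ℝ × (Fin d → ℝ) → ℝ)
    (hU : ∀ k : Fin d, U k =
      if (k : ℕ) + 1 = 2 * i - 1 ∨ (k : ℕ) + 1 = 2 * i then u k else fun _ => 0)
    (Ω : Fin d → Fin d → ℝ × (Fin d → ℝ) → ℝ)
    (hΩ : ∀ j k p, Ω j k p = pdx j (U k) p - pdx k (U j) p) :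
    ∀ j k p, pdt (Ω j k) p
      + ∑ m, (u m p * pdx m (Ω j k) p + Ω m k p * pdx j (u m) p + Ω j m p * pdx k (u m) p)
      = 0 := by
  classical
  intro j k p
  set c : Fin d → ℝ :=
    fun m => if (m : ℕ) + 1 = 2 * i - 1 ∨ (m : ℕ) + 1 = 2 * i then 1 else 0 with hc
  have hcU : ∀ m : Fin d, U m = fun q => c m * u m q := by
    intro m
    rw [hU m, hc]
    by_cases h : (m : ℕ) + 1 = 2 * i - 1 ∨ (m : ℕ) + 1 = 2 * i <;> simp [h]
  have hpdxU : ∀ (a b : Fin d) (q : ℝ × (Fin d → ℝ)),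
      pdx a (U b) q = c b * pdx a (u b) q := by
    intro a b q
    rw [hcU b, pdx_const_mul (hdiff (hu b) q)]
  have hΩfun : ∀ a b : Fin d,
      Ω a b = fun q => c b * pdx a (u b) q - c a * pdx b (u a) q := by
    intro a b; funext q; rw [hΩ a b q, hpdxU, hpdxU]
  have hDxd : ∀ (a b : Fin d) (q : ℝ × (Fin d → ℝ)),
      DifferentiableAt ℝ (fun x => pdx a (u b) x) q :=
    fun a b q => hdiff (pdx_contDiff (hu b)) q
  -- time derivative of Ω j k
  have step1 : pdt (Ω j k) p
      = c k * pdx j (fun q => pdt (u k) q) p - c j * pdx k (fun q => pdt (u j) q) p := by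
    rw [hΩfun j k,
      pdt_sub ((hDxd j k p).const_mul (c k)) ((hDxd k j p).const_mul (c j)),
      pdt_const_mul (hDxd j k p), pdt_const_mul (hDxd k j p),
      ← pdx_pdt_comm (hu k), ← pdx_pdt_comm (hu j)]
  -- each summand
  have step2 : ∀ m : Fin d,
      u m p * pdx m (Ω j k) p + Ω m k p * pdx j (u m) p + Ω j m p * pdx k (u m) p
      = c k * (pdx j (u m) p * pdx m (u k) p + u m p * pdx j (fun q => pdx m (u k) q) p)
        - c j * (pdx k (u m) p * pdx m (u j) p + u m p * pdx k (fun q => pdx m (u j) q) p) := by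
    intro m
    have hx : pdx m (Ω j k) p
        = c k * pdx m (fun q => pdx j (u k) q) p - c j * pdx m (fun q => pdx k (u j) q) p := by
      rw [hΩfun j k,
        pdx_sub ((hDxd j k p).const_mul (c k)) ((hDxd k j p).const_mul (c j)),
        pdx_const_mul (hDxd j k p), pdx_const_mul (hDxd k j p)]
    rw [hx, hΩ m k p, hΩ j m p, hpdxU, hpdxU, hpdxU, hpdxU,
      pdx_pdx_comm (hu k) (a := m) (b := j), pdx_pdx_comm (hu j) (a := m) (b := k)]
    ring
  have hsum2 : ∑ m, (u m p * pdx m (Ω j k) p + Ω m k p * pdx j (u m) p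
        + Ω j m p * pdx k (u m) p)
      = c k * ∑ m, (pdx j (u m) p * pdx m (u k) p
            + u m p * pdx j (fun q => pdx m (u k) q) p)
        - c j * ∑ m, (pdx k (u m) p * pdx m (u j) p
            + u m p * pdx k (fun q => pdx m (u j) q) p) := by
    rw [Finset.sum_congr rfl fun m _ => step2 m, Finset.sum_sub_distrib,
      Finset.mul_sum, Finset.mul_sum]
  have e1 := euler_deriv u P hu heuler j k p
  have e2 := euler_deriv u P hu heuler k j p
  have hqq : pdx k (fun q => pdx j P q) p = pdx j (fun q => pdx k P q) p :=
    pdx_pdx_comm hP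
  rw [hqq] at e2
  -- the vanishing of the pressure term
  have hczero : (c j - c k) * pdx j (fun q => pdx k P q) p = 0 := by
    by_cases hk2 : (k : ℕ) + 1 = 2 * i - 1 ∨ (k : ℕ) + 1 = 2 * i
    · by_cases hj2 : (j : ℕ) + 1 = 2 * i - 1 ∨ (j : ℕ) + 1 = 2 * i
      · simp [hc, hk2, hj2]
      · have hQ : pdx j (fun q => pdx k P q) p = 0 := by
          by_cases hbig : 2 * i < (j : ℕ) + 1
          · exact keyP u P hu hRSF heuler k j
              (by rcases hk2 with h | h <;> omega) p
          · push_neg at hj2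
            rw [pdx_pdx_comm hP]
            exact keyP u P hu hRSF heuler j k
              (by rcases hk2 with h | h <;> omega) p
        rw [hQ]; ring
    · by_cases hj2 : (j : ℕ) + 1 = 2 * i - 1 ∨ (j : ℕ) + 1 = 2 * i
      · have hQ : pdx j (fun q => pdx k P q) p = 0 := by
          by_cases hbig : 2 * i < (k : ℕ) + 1
          · rw [pdx_pdx_comm hP]
            exact keyP u P hu hRSF heuler j k
              (by rcases hj2 with h | h <;> omega) p
          · push_neg at hk2
            exact keyP u P hu hRSF heuler k j
              (by rcases hj2 with h | h <;> omega) p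
        rw [hQ]; ring
      · simp [hc, hk2, hj2]
  rw [step1, hsum2]
  linear_combination c k * e1 - c j * e2 + hczero
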